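/- arXiv:1005.0746 — 2 statements merged into one kernel-verified Lean document; each statement's English description precedes it below -/
import Mathlib

section
/- Let g be a finite-dimensional complex Lie algebra, θ an involutive Lie algebra automorphism of g, and p = {x ∈ g : θ(x) = −x}. Let u₀ ∈ p, let u = c_p(u₀) = {x ∈ p : ⁅x, u₀⁆ = 0} be its centralizer in p, and let v be a linear subspace of p complementary to u (p = u ⊕ v). Let T be the space of linear maps a : u → v such that ⁅u₁, a(u₂)⁆ = ⁅u₂, a(u₁)⁆ for all u₁, u₂ ∈ u. Then the linear map T → v sending a to a(u₀) is injective; consequently dim T ≤ dim p − dim c_p(u₀). (This is the tangent-space computation in the paper's Theorem 3.7, showing that the variety of anisotropic subalgebras is smooth of dimension dim p − r at the centralizer of a regular element.) -/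
open Module

variable {g : Type*} [LieRing g] [LieAlgebra ℂ g]

/-- The `(−1)`-eigenspace `p` of an involution `θ` (the anisotropic space). -/
def negSpace (θ : g →ₗ⁅ℂ⁆ g) : Submodule ℂ g where
  carrier := {x | θ x = -x}
  add_mem' := fun {a b} ha hb => by
    simp only [Set.mem_setOf_eq] at *
    rw [map_add, ha, hb, neg_add]
  zero_mem' := by simp only [Set.mem_setOf_eq, map_zero, neg_zero]
  smul_mem' := fun c x hx => by
    simp only [Set.mem_setOf_eq] at *
    rw [map_smul, hx, smul_neg]

@[simp] lemma mem_negSpace (θ : g →ₗ⁅ℂ⁆ g) (x : g) : x ∈ negSpace θ ↔ θ x = -x := Iff.rfl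

/-- The space `T` of linear maps `a : u → v` such that `⁅u₁, a u₂⁆ = ⁅u₂, a u₁⁆`
for all `u₁, u₂ ∈ u`. -/
def symMaps (u v : Submodule ℂ g) : Submodule ℂ (u →ₗ[ℂ] v) where
  carrier := {a | ∀ x y : u, ⁅(x : g), ((a y : v) : g)⁆ = ⁅(y : g), ((a x : v) : g)⁆}
  add_mem' := fun {a b} ha hb => by
    intro x y
    simp only [LinearMap.add_apply, Submodule.coe_add, lie_add, ha x y, hb x y]
  zero_mem' := by
    intro x y
    simp
  smul_mem' := fun c a ha => by
    intro x y
    simp only [LinearMap.smul_apply, Submodule.coe_smul, lie_smul, ha x y]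

/-- Let `u₀ ∈ p`, `u = c_p(u₀)` its centralizer in `p`, and `v` a
complement of `u` in `p`.  Let `T` be the space of linear maps `a : u → v` with
`⁅u₁, a u₂⁆ = ⁅u₂, a u₁⁆` for all `u₁, u₂ ∈ u`.  Then `a ↦ a u₀` is injective on `T`;
consequently `dim T ≤ dim p − dim c_p(u₀)`. -/
theorem symMaps_eval_injective
    (g : Type*) [LieRing g] [LieAlgebra ℂ g] [FiniteDimensional ℂ g]
    (θ : g →ₗ⁅ℂ⁆ g) (hθ : ∀ x, θ (θ x) = x)
    (u₀ : g) (h₀ : θ u₀ = -u₀)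
    (u : Submodule ℂ g) (hu : ∀ x, x ∈ u ↔ (θ x = -x ∧ ⁅x, u₀⁆ = 0))
    (v : Submodule ℂ g) (hv : v ≤ negSpace θ)
    (hdisj : u ⊓ v = ⊥) (hspan : ∀ x, θ x = -x → x ∈ u ⊔ v) :
    (∀ a b : u →ₗ[ℂ] v, a ∈ symMaps u v → b ∈ symMaps u v →
        a ⟨u₀, (hu u₀).mpr ⟨h₀, lie_self u₀⟩⟩ = b ⟨u₀, (hu u₀).mpr ⟨h₀, lie_self u₀⟩⟩ →
        a = b) ∧
      finrank ℂ (symMaps u v) ≤ finrank ℂ (negSpace θ) - finrank ℂ u := by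
  set u₀' : u := ⟨u₀, (hu u₀).mpr ⟨h₀, lie_self u₀⟩⟩ with hu₀'
  have key : ∀ a : u →ₗ[ℂ] v, a ∈ symMaps u v → a u₀' = 0 → a = 0 := by
    intro a ha h0
    ext x
    have h1 := ha x u₀'
    rw [h0] at h1
    simp only [ZeroMemClass.coe_zero, lie_zero] at h1
    have h2 : ⁅((a x : v) : g), u₀⁆ = 0 := by
      rw [← lie_skew, ← h1, neg_zero]
    have h3 : ((a x : v) : g) ∈ u := (hu _).mpr ⟨hv (a x).2, h2⟩
    have h4 : ((a x : v) : g) ∈ u ⊓ v := ⟨h3, (a x).2⟩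
    rw [hdisj] at h4
    simpa using h4
  have hinj : ∀ a b : u →ₗ[ℂ] v, a ∈ symMaps u v → b ∈ symMaps u v →
      a u₀' = b u₀' → a = b := by
    intro a b ha hb hab
    have := key (a - b) (sub_mem ha hb) (by
      simp [LinearMap.sub_apply, sub_eq_zero, hab])
    rwa [sub_eq_zero] at this
  refine ⟨hinj, ?_⟩
  let E : symMaps u v →ₗ[ℂ] v :=
    { toFun := fun a => (a : u →ₗ[ℂ] v) u₀'
      map_add' := fun a b => rfl
      map_smul' := fun c a => rfl }
  have hEinj : Function.Injective E := by
    rw [injective_iff_map_eq_zero]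
    intro a h
    exact Subtype.ext (key a a.2 h)
  have h5 : finrank ℂ (symMaps u v) ≤ finrank ℂ v :=
    LinearMap.finrank_le_finrank_of_injective hEinj
  have hsup : u ⊔ v = negSpace θ :=
    le_antisymm (sup_le (fun x hx => ((hu x).mp hx).1) hv) (fun x hx => hspan x hx)
  have h6 := Submodule.finrank_sup_add_finrank_inf_eq u v
  rw [hsup, hdisj] at h6
  simp only [finrank_bot, add_zero] at h6
  omega
end

section
/- Let g be a finite-dimensional complex Lie algebra, θ an involutive Lie algebra automorphism of g, k and p the (+1)- and (−1)-eigenspaces of θ, and r ≥ 2 an integer. Let A_r : Λ^r p → k ⊗ Λ^{r−2} p be the linear map defined on decomposable multivectors by A_r(x₁ ∧ ⋯ ∧ x_r) = Σ_{1 ≤ i < j ≤ r} ⁅x_i, x_j⁆ ⊗ x₁ ∧ ⋯ ∧ x̂_i ∧ ⋯ ∧ x̂_j ∧ ⋯ ∧ x_r (hatted terms omitted; note ⁅x_i, x_j⁆ ∈ k since x_i, x_j ∈ p). Then for linearly independent vectors x₁, …, x_r ∈ p, one has A_r(x₁ ∧ ⋯ ∧ x_r) = 0 if and only if ⁅x_i,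 x_j⁆ = 0 for all i, j, i.e. if and only if the span of x₁, …, x_r is an (abelian) Lie subalgebra of g contained in p. -/
open Module TensorProduct

variable {g : Type*} [LieRing g] [LieAlgebra ℂ g]

/-- The `(+1)`-eigenspace `k` of an involution `θ`. -/
def posSpace (θ : g →ₗ⁅ℂ⁆ g) : Submodule ℂ g where
  carrier := {x | θ x = x}
  add_mem' := fun {a b} ha hb => by
    simp only [Set.mem_setOf_eq] at *
    rw [map_add, ha, hb]
  zero_mem' := by simp only [Set.mem_setOf_eq, map_zero]
  smul_mem' := fun c x hx => by
    simp only [Set.mem_setOf_eq] at *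
    rw [map_smul, hx]

/-- For `x, y ∈ p` the bracket `⁅x, y⁆` lies in `k`. -/
def pBracket (θ : g →ₗ⁅ℂ⁆ g) (x y : negSpace θ) : posSpace θ :=
  ⟨⁅(x : g), (y : g)⁆, by
    have hx : θ (x : g) = -(x : g) := x.2
    have hy : θ (y : g) = -(y : g) := y.2
    show θ ⁅(x : g), (y : g)⁆ = ⁅(x : g), (y : g)⁆
    rw [θ.map_lie, hx, hy, neg_lie, lie_neg, neg_neg]⟩

/-- The strictly increasing enumeration of the complement of `{i, j}` in `Fin r`. -/
def skip2 {r : ℕ} (i j : Fin r) (hij : i ≠ j) : Fin (r - 2) → Fin r := fun q =>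
  ({i, j}ᶜ : Finset (Fin r)).orderEmbOfFin
    (by rw [Finset.card_compl, Finset.card_pair hij, Fintype.card_fin]) q

/-- The decomposable multivector `v₁ ∧ ⋯ ∧ vₙ`, as an element of the `n`-th exterior power. -/
noncomputable def wedge (M : Type*) [AddCommGroup M] [Module ℂ M] (n : ℕ)
    (v : Fin n → M) : ⋀[ℂ]^n M :=
  ⟨ExteriorAlgebra.ιMulti ℂ n v, ExteriorAlgebra.ιMulti_range ℂ n (Set.mem_range_self v)⟩

/-- Let `θ` be an involutive automorphism of a finite-dimensional complex
Lie algebra `g` with eigenspaces `k`, `p`, and let `r ≥ 2`.  Let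
`A : Λ^r p → k ⊗ Λ^{r−2} p` be the linear map with
`A (x₁ ∧ ⋯ ∧ x_r) = Σ_{i<j} ⁅x_i, x_j⁆ ⊗ x₁ ∧ ⋯ ∧ x̂_i ∧ ⋯ ∧ x̂_j ∧ ⋯ ∧ x_r`.
Then for linearly independent `x₁, …, x_r ∈ p` one has `A (x₁ ∧ ⋯ ∧ x_r) = 0` iff
`⁅x_i, x_j⁆ = 0` for all `i, j`, i.e. iff the span of the `x_i` is an (abelian) Lie
subalgebra of `g` contained in `p`. -/
theorem anisotropic_subalgebra_iff_in_ker
    (g : Type*) [LieRing g] [LieAlgebra ℂ g] [FiniteDimensional ℂ g]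
    (θ : g →ₗ⁅ℂ⁆ g) (hθ : ∀ x, θ (θ x) = x)
    (r : ℕ) (hr : 2 ≤ r)
    (A : ↥(⋀[ℂ]^r ↥(negSpace θ)) →ₗ[ℂ]
      (↥(posSpace θ) ⊗[ℂ] ↥(⋀[ℂ]^(r - 2) ↥(negSpace θ))))
    (hA : ∀ x : Fin r → ↥(negSpace θ),
      A (wedge ↥(negSpace θ) r x) =
        ∑ q : {q : Fin r × Fin r // q.1 < q.2},
          pBracket θ (x q.1.1) (x q.1.2) ⊗ₜ[ℂ]
            wedge ↥(negSpace θ) (r - 2) (x ∘ skip2 q.1.1 q.1.2 (ne_of_lt q.2)))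
    (x : Fin r → ↥(negSpace θ)) (hx : LinearIndependent ℂ x) :
    A (wedge ↥(negSpace θ) r x) = 0 ↔
      ∀ i j, ⁅(x i : g), (x j : g)⁆ = 0 := by
  classical
  -- dual functionals for the independent family `x`
  let W : Submodule ℂ ↥(negSpace θ) := Submodule.span ℂ (Set.range x)
  let bs : Basis (Fin r) ℂ W := Basis.span hx
  obtain ⟨Q, hQ⟩ := Submodule.exists_isCompl W
  let π : ↥(negSpace θ) →ₗ[ℂ] W := W.linearProjOfIsCompl Q hQ
  let f : Fin r → (↥(negSpace θ) →ₗ[ℂ] ℂ) := fun k => (bs.coord k) ∘ₗ π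
  have hf : ∀ k m, f k (x m) = if m = k then 1 else 0 := by
    intro k m
    have hmem : x m ∈ W := Submodule.subset_span (Set.mem_range_self m)
    have hπ : π (x m) = bs m := by
      have h1 : π ((⟨x m, hmem⟩ : W) : ↥(negSpace θ)) = ⟨x m, hmem⟩ :=
        Submodule.linearProjOfIsCompl_apply_left hQ ⟨x m, hmem⟩
      have h2 : bs m = ⟨x m, hmem⟩ := Basis.span_apply hx m
      rw [h2]; exact h1
    show bs.coord k (π (x m)) = _
    rw [hπ, Basis.coord_apply, Basis.repr_self, Finsupp.single_apply]
  -- the key claim for ordered pairs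
  have key : ∀ (i0 j0 : Fin r), i0 < j0 →
      A (wedge ↥(negSpace θ) r x) = 0 → ⁅(x i0 : g), (x j0 : g)⁆ = 0 := by
    intro i0 j0 hlt h0
    have hne : i0 ≠ j0 := ne_of_lt hlt
    -- alternating functional picking out the wedge indexed by the complement of {i0, j0}
    let F : ↥(negSpace θ) →ₗ[ℂ] (Fin (r - 2) → ℂ) := LinearMap.pi (fun q => f (skip2 i0 j0 hne q))
    let D : AlternatingMap ℂ ↥(negSpace θ) ℂ (Fin (r - 2)) := Matrix.detRowAlternating.compLinearMap F
    let fa : ∀ n, AlternatingMap ℂ ↥(negSpace θ) ℂ (Fin n) :=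
      Function.update (fun n => (0 : AlternatingMap ℂ ↥(negSpace θ) ℂ (Fin n))) (r - 2) D
    let φ : ExteriorAlgebra ℂ ↥(negSpace θ) →ₗ[ℂ] ℂ := ExteriorAlgebra.liftAlternating fa
    let φ' : ↥(⋀[ℂ]^(r - 2) ↥(negSpace θ)) →ₗ[ℂ] ℂ := φ ∘ₗ (⋀[ℂ]^(r - 2) ↥(negSpace θ)).subtype
    have hφ' : ∀ v : Fin (r - 2) → ↥(negSpace θ), φ' (wedge ↥(negSpace θ) (r - 2) v) = D v := by
      intro v
      show φ (ExteriorAlgebra.ιMulti ℂ (r - 2) v) = D v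
      rw [ExteriorAlgebra.liftAlternating_apply_ιMulti]
      show Function.update (fun n => (0 : AlternatingMap ℂ ↥(negSpace θ) ℂ (Fin n))) (r - 2) D (r - 2) v = D v
      rw [Function.update_self]
    -- evaluate `D` on the sub-families
    have hD : ∀ (i j : Fin r) (hij : i ≠ j),
        D (x ∘ skip2 i j hij) =
          Matrix.det (Matrix.of fun q q' => f (skip2 i0 j0 hne q') (x (skip2 i j hij q))) := by
      intro i j hij
      rfl
    have hrange : ∀ (i j : Fin r) (hij : i ≠ j),
        Set.range (skip2 i j hij) = (({i, j}ᶜ : Finset (Fin r)) : Set (Fin r)) := by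
      intro i j hij
      exact Finset.range_orderEmbOfFin _ _
    have hmemc : ∀ (i j : Fin r) (hij : i ≠ j) (q : Fin (r - 2)),
        skip2 i j hij q ∈ ({i, j}ᶜ : Finset (Fin r)) := by
      intro i j hij q
      have : skip2 i j hij q ∈ Set.range (skip2 i j hij) := Set.mem_range_self q
      rwa [hrange i j hij, Finset.mem_coe] at this
    -- value on the distinguished pair
    have hD0 : D (x ∘ skip2 i0 j0 hne) = 1 := by
      rw [hD]
      have : (Matrix.of fun q q' => f (skip2 i0 j0 hne q') (x (skip2 i0 j0 hne q))) =
          (1 : Matrix (Fin (r - 2)) (Fin (r - 2)) ℂ) := by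
        ext q q'
        rw [Matrix.of_apply, hf, Matrix.one_apply]
        have hinj : Function.Injective (skip2 i0 j0 hne) :=
          (({i0, j0}ᶜ : Finset (Fin r)).orderEmbOfFin _).injective
        by_cases h : q = q'
        · subst h; simp
        · rw [if_neg (fun hc => h (hinj hc)), if_neg h]
      rw [this, Matrix.det_one]
    -- value on the other pairs
    have hD1 : ∀ (i j : Fin r) (hij : i < j), (i, j) ≠ (i0, j0) →
        D (x ∘ skip2 i j (ne_of_lt hij)) = 0 := by
      intro i j hij hne2
      have hsetne : ({i0, j0} : Finset (Fin r)) ≠ {i, j} := by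
        intro hc
        have hi0 : i0 = i ∧ j0 = j := by
          have h1 : i0 ∈ ({i, j} : Finset (Fin r)) := by rw [← hc]; simp
          have h2 : j0 ∈ ({i, j} : Finset (Fin r)) := by rw [← hc]; simp
          simp only [Finset.mem_insert, Finset.mem_singleton] at h1 h2
          rcases h1 with h1 | h1
          · rcases h2 with h2 | h2
            · exact absurd (h1 ▸ h2 ▸ hlt) (lt_irrefl _)
            · exact ⟨h1, h2⟩
          · exfalso
            rcases h2 with h2 | h2
            · exact absurd (h2 ▸ h1 ▸ hlt) (not_lt_of_gt hij)
            · exact absurd (h1 ▸ h2 ▸ hlt) (lt_irrefl _)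
        exact hne2 (by rw [Prod.ext_iff]; exact ⟨hi0.1.symm, hi0.2.symm⟩)
      have hnotsub : ¬ ({i0, j0} : Finset (Fin r)) ⊆ {i, j} := by
        intro hc
        refine hsetne (Finset.eq_of_subset_of_card_le hc ?_)
        rw [Finset.card_pair (ne_of_lt hij), Finset.card_pair hne]
      obtain ⟨m, hm1, hm2⟩ := Finset.not_subset.mp hnotsub
      have hmc : m ∈ (({i, j}ᶜ : Finset (Fin r)) : Set (Fin r)) := by
        rw [Finset.coe_compl]
        exact fun hc => hm2 (Finset.mem_coe.mp hc)
      rw [← hrange i j (ne_of_lt hij)] at hmc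
      obtain ⟨q, hq⟩ := hmc
      rw [hD]
      apply Matrix.det_eq_zero_of_row_eq_zero q
      intro q'
      rw [Matrix.of_apply, hq, hf]
      rw [if_neg]
      intro hc
      have := hmemc i0 j0 hne q'
      rw [← hc] at this
      rw [Finset.mem_compl] at this
      exact this hm1
    -- apply the contraction `b ⊗ w ↦ φ' w • b` to the sum
    let L : (↥(posSpace θ) ⊗[ℂ] ↥(⋀[ℂ]^(r - 2) ↥(negSpace θ))) →ₗ[ℂ] ↥(posSpace θ) :=
      (TensorProduct.rid ℂ ↥(posSpace θ)).toLinearMap ∘ₗ TensorProduct.map LinearMap.id φ'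
    have hL : ∀ (b : ↥(posSpace θ)) (w : ↥(⋀[ℂ]^(r - 2) ↥(negSpace θ))), L (b ⊗ₜ[ℂ] w) = φ' w • b := by
      intro b w
      simp [L, TensorProduct.map_tmul]
    have hsum : L (A (wedge ↥(negSpace θ) r x)) = pBracket θ (x i0) (x j0) := by
      rw [hA, map_sum]
      rw [Finset.sum_eq_single (⟨(i0, j0), hlt⟩ : {q : Fin r × Fin r // q.1 < q.2})]
      · rw [hL, hφ', hD0, one_smul]
      · intro q _ hq
        rw [hL, hφ']
        have : (q.1.1, q.1.2) ≠ (i0, j0) := by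
          intro hc
          apply hq
          ext : 2
          · exact congrArg Prod.fst hc
          · exact congrArg Prod.snd hc
        rw [hD1 q.1.1 q.1.2 q.2 this, zero_smul]
      · intro h
        exact absurd (Finset.mem_univ _) h
    rw [h0, map_zero] at hsum
    have : pBracket θ (x i0) (x j0) = 0 := hsum.symm
    exact congrArg Subtype.val this
  constructor
  · intro h0 i j
    rcases lt_trichotomy i j with h | h | h
    · exact key i j h h0
    · subst h; exact lie_self _
    · rw [← lie_skew, key j i h h0, neg_zero]
  · intro h
    rw [hA]
    apply Finset.sum_eq_zero
    intro q _
    have : pBracket θ (x q.1.1) (x q.1.2) = 0 := Subtype.ext (h _ _)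
    rw [this, TensorProduct.zero_tmul]
end
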